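/- Let E be a KB-space (every increasing norm-bounded net in E₊ is norm convergent) and T a positive linear contraction on E. For every f with Tf = f, the sequence (Tⁿ|f|) is increasing and norm convergent to a vector h ∈ fix T which is the smallest upper bound of f and −f within fix T. Consequently fix T is a lattice subspace of E. -/

import Mathlib

/-- In a KB-space `E` (every increasing norm-bounded net in `E₊` is norm convergent),
for every positive linear contraction `T` on `E` and every fixed vector `f` of `T`,
the sequence `(Tⁿ|f|)` is increasing and norm convergent to a vector `h` which is a
fixed vector of `T` and the smallest upper bound of `f` and `-f` within the fixed
space of `T`.  Consequently, the fixed space of `T` is a lattice subspace of `E`. -/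
theorem fixed_space_lattice_subspace_of_KB
    {E : Type*} [NormedAddCommGroup E] [Lattice E] [IsOrderedAddMonoid E] [HasSolidNorm E] [NormedSpace ℝ E] [CompleteSpace E]
    -- `E` is a KB-space: every increasing norm-bounded net in `E₊` is norm convergent
    (hKB : ∀ D : Set E, D.Nonempty → DirectedOn (· ≤ ·) D → (∀ x ∈ D, 0 ≤ x) →
      (∃ C : ℝ, ∀ x ∈ D, ‖x‖ ≤ C) →
      ∃ b : E, IsLUB D b ∧ ∀ ε > (0 : ℝ), ∃ x ∈ D, ∀ y ∈ D, x ≤ y → ‖b - y‖ < ε)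
    (T : E →L[ℝ] E) (hpos : ∀ f : E, 0 ≤ f → 0 ≤ T f) (hcontr : ‖T‖ ≤ 1) :
    ∀ f : E, T f = f →
      Monotone (fun n : ℕ => (T ^ n) |f|) ∧
      ∃ h : E, Filter.Tendsto (fun n : ℕ => (T ^ n) |f|) Filter.atTop (nhds h) ∧
        T h = h ∧ IsLeast {g : E | T g = g ∧ f ≤ g ∧ -f ≤ g} h := by
  intro f hf
  have hmonoT : ∀ a b : E, a ≤ b → T a ≤ T b := by
    intro a b h
    have := hpos (b - a) (by simpa using h)
    rw [map_sub, sub_nonneg] at this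
    exact this
  have hmonoTn : ∀ n : ℕ, ∀ a b : E, a ≤ b → (T ^ n) a ≤ (T ^ n) b := by
    intro n
    induction n with
    | zero => intro a b h; simpa using h
    | succ n ih =>
      intro a b h
      have h1 := hmonoT _ _ (ih a b h)
      simpa [pow_succ', ContinuousLinearMap.mul_apply] using h1
  have key : |f| ≤ T |f| := by
    have h1 : f ≤ T |f| := by
      calc f = T f := hf.symm
        _ ≤ T |f| := hmonoT _ _ (le_abs_self f)
    have h2 : -f ≤ T |f| := by
      have hTneg : T (-f) = -f := by rw [map_neg, hf]
      calc -f = T (-f) := hTneg.symm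
        _ ≤ T |f| := hmonoT _ _ (neg_le_abs f)
    exact abs_le'.mpr ⟨h1, h2⟩
  have hmono : Monotone (fun n : ℕ => (T ^ n) |f|) := by
    apply monotone_nat_of_le_succ
    intro n
    have := hmonoTn n _ _ key
    simpa [pow_succ, ContinuousLinearMap.mul_apply] using this
  have hnorm : ∀ n : ℕ, ‖(T ^ n) |f|‖ ≤ ‖f‖ := by
    intro n
    induction n with
    | zero => simp [norm_abs_eq_norm]
    | succ n ih =>
      have h1 : ‖(T ^ (n + 1)) |f|‖ = ‖T ((T ^ n) |f|)‖ := by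
        rw [pow_succ', ContinuousLinearMap.mul_apply]
      rw [h1]
      calc ‖T ((T ^ n) |f|)‖ ≤ ‖T‖ * ‖(T ^ n) |f|‖ := T.le_opNorm _
        _ ≤ 1 * ‖f‖ := by
            apply mul_le_mul hcontr ih (norm_nonneg _) zero_le_one
        _ = ‖f‖ := one_mul _
  set D : Set E := Set.range (fun n : ℕ => (T ^ n) |f|) with hD
  have hne : D.Nonempty := ⟨(T ^ 0) |f|, ⟨0, rfl⟩⟩
  have hdir : DirectedOn (· ≤ ·) D := by
    rintro x ⟨m, rfl⟩ y ⟨n, rfl⟩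
    exact ⟨(T ^ (max m n)) |f|, ⟨max m n, rfl⟩,
      hmono (le_max_left m n), hmono (le_max_right m n)⟩
  have hposD : ∀ x ∈ D, 0 ≤ x := by
    rintro x ⟨n, rfl⟩
    have := hmonoTn n 0 |f| (abs_nonneg f)
    simpa using this
  have hbdd : ∃ C : ℝ, ∀ x ∈ D, ‖x‖ ≤ C := by
    refine ⟨‖f‖, ?_⟩
    rintro x ⟨n, rfl⟩
    exact hnorm n
  obtain ⟨b, hlub, happrox⟩ := hKB D hne hdir hposD hbdd
  have htend : Filter.Tendsto (fun n : ℕ => (T ^ n) |f|) Filter.atTop (nhds b) := by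
    rw [Metric.tendsto_atTop]
    intro ε hε
    obtain ⟨x, ⟨m, rfl⟩, hx⟩ := happrox ε hε
    refine ⟨m, fun n hn => ?_⟩
    have := hx ((T ^ n) |f|) ⟨n, rfl⟩ (hmono hn)
    rw [dist_eq_norm, ← norm_neg]
    simpa [neg_sub] using this
  have hTb : T b = b := by
    have h1 : Filter.Tendsto (fun n : ℕ => T ((T ^ n) |f|)) Filter.atTop (nhds (T b)) :=
      (T.continuous.tendsto b).comp htend
    have h2 : (fun n : ℕ => T ((T ^ n) |f|)) = fun n : ℕ => (T ^ (n + 1)) |f| := by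
      funext n
      rw [pow_succ', ContinuousLinearMap.mul_apply]
    rw [h2] at h1
    have h3 : Filter.Tendsto (fun n : ℕ => (T ^ (n + 1)) |f|) Filter.atTop (nhds b) :=
      htend.comp (Filter.tendsto_add_atTop_nat 1)
    exact tendsto_nhds_unique h1 h3
  have habs_le_b : |f| ≤ b := by
    have : (T ^ 0) |f| ∈ D := ⟨0, rfl⟩
    have h := hlub.1 this
    simpa using h
  refine ⟨hmono, b, htend, hTb, ⟨⟨hTb, le_trans (le_abs_self f) habs_le_b,
    le_trans (neg_le_abs f) habs_le_b⟩, ?_⟩⟩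
  rintro g ⟨hTg, hfg, hnfg⟩
  have habsg : |f| ≤ g := abs_le'.mpr ⟨hfg, hnfg⟩
  have hTng : ∀ n : ℕ, (T ^ n) g = g := by
    intro n
    induction n with
    | zero => simp
    | succ n ih => rw [pow_succ', ContinuousLinearMap.mul_apply, ih, hTg]
  apply hlub.2
  rintro x ⟨n, rfl⟩
  calc (T ^ n) |f| ≤ (T ^ n) g := hmonoTn n _ _ habsg
    _ = g := hTng n
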